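/- Let p, q : (0,1) → ℝ be nonnegative integrable functions such that: p and q are symmetric (p(x) = p(1-x) and q(x) = q(1-x) for all x ∈ (0,1)); p is non-decreasing on (0, 1/2]; q is convex on (0, 1/2]; q(x) → 0 as x → 0⁺ (with q extended by q(0) = 0); and ∫₀¹ q(x) dx = 1. Let φ : [0,1] → ℝ be concave, integrable, symmetric (φ(x) = φ(1-x)), and satisfy φ(0) ≥ 0. Then, writing K = ∫₀¹ φ(x) dx, one has 0 ≤ ∫₀^{1/2} (K·q(x) − φ(x))·p(x) dx, i.e. ∫₀¹ p(x)φ(x) dx ≤ K · ∫₀¹ p(x)q(x) dx. -/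

import Mathlib

open MeasureTheory Set Filter
lemma gcs_sym_int (F : ℝ → ℝ) (hF : IntegrableOn F (Ioo 0 1))
    (hs : ∀ x ∈ Ioo (0:ℝ) 1, F x = F (1 - x)) :
    ∫ x in Ioo (0:ℝ) 1, F x = 2 * ∫ x in Ioo (0:ℝ) (1/2), F x := by
  have hsub1 : Ioo (0:ℝ) (1/2) ⊆ Ioo 0 1 := Ioo_subset_Ioo le_rfl (by norm_num)
  have hsub2 : Ioo (1/2:ℝ) 1 ⊆ Ioo 0 1 := Ioo_subset_Ioo (by norm_num) le_rfl
  have hFi1 : IntervalIntegrable F volume 0 (1/2) := by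
    rw [intervalIntegrable_iff_integrableOn_Ioo_of_le (by norm_num)]
    exact hF.mono_set hsub1
  have hFi2 : IntervalIntegrable F volume (1/2) 1 := by
    rw [intervalIntegrable_iff_integrableOn_Ioo_of_le (by norm_num)]
    exact hF.mono_set hsub2
  have hsplit := intervalIntegral.integral_add_adjacent_intervals hFi1 hFi2
  have h01 : ∫ x in Ioo (0:ℝ) 1, F x = ∫ x in (0:ℝ)..1, F x := by
    rw [intervalIntegral.integral_of_le (by norm_num), integral_Ioc_eq_integral_Ioo]
  have hhalf : ∫ x in Ioo (0:ℝ) (1/2), F x = ∫ x in (0:ℝ)..(1/2), F x := by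
    rw [intervalIntegral.integral_of_le (by norm_num), integral_Ioc_eq_integral_Ioo]
  have hcomp := intervalIntegral.integral_comp_sub_left (a := (0:ℝ)) (b := 1/2) F 1
  rw [show (1:ℝ) - 1/2 = 1/2 by norm_num, show (1:ℝ) - 0 = 1 by norm_num] at hcomp
  have hcongr : ∫ x in (0:ℝ)..(1/2), F (1 - x) = ∫ x in (0:ℝ)..(1/2), F x := by
    rw [intervalIntegral.integral_of_le (by norm_num),
        intervalIntegral.integral_of_le (by norm_num),
        integral_Ioc_eq_integral_Ioo, integral_Ioc_eq_integral_Ioo]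
    apply setIntegral_congr_fun measurableSet_Ioo
    intro x hx
    exact (hs x (hsub1 hx)).symm
  rw [h01, hhalf, ← hsplit, ← hcomp, hcongr]
  ring

lemma gcs_key_aux (q φ : ℝ → ℝ) (K : ℝ) (hK : 0 ≤ K)
    (hq_conv : ConvexOn ℝ (Ioc 0 (1/2:ℝ)) q)
    (hφ_conc : ConcaveOn ℝ (Icc 0 1) φ)
    (hφ_lb : ∀ ε ∈ Ioo (0:ℝ) 1, 0 ≤ φ ε)
    {x y ε : ℝ} (hε0 : 0 < ε) (hεy : ε < y) (hyx : y < x) (hx : x ≤ 1/2) :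
    K * q y - φ y ≤ ((x - y)/(x - ε)) * (K * q ε)
      + (1 - (x - y)/(x - ε)) * (K * q x - φ x) := by
  have hx0 : (0:ℝ) < x := by linarith
  have hxε : 0 < x - ε := by linarith
  set t : ℝ := (x - y)/(x - ε) with htdef
  have ht0 : 0 < t := div_pos (by linarith) hxε
  have ht1 : t < 1 := (div_lt_one hxε).mpr (by linarith)
  have hyeq : t * ε + (1 - t) * x = y := by
    rw [htdef]; field_simp; ring
  have hεmem : ε ∈ Ioc (0:ℝ) (1/2) := ⟨hε0, by linarith⟩
  have hxmem : x ∈ Ioc (0:ℝ) (1/2) := ⟨hx0, hx⟩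
  have hεI : ε ∈ Icc (0:ℝ) 1 := ⟨hε0.le, by linarith⟩
  have hxI : x ∈ Icc (0:ℝ) 1 := ⟨hx0.le, by linarith⟩
  have hqc := hq_conv.2 hεmem hxmem ht0.le (show (0:ℝ) ≤ 1 - t by linarith)
    (show t + (1 - t) = 1 by ring)
  have hφc := hφ_conc.2 hεI hxI ht0.le (show (0:ℝ) ≤ 1 - t by linarith)
    (show t + (1 - t) = 1 by ring)
  simp only [smul_eq_mul, hyeq] at hqc hφc
  have hφε : 0 ≤ φ ε := hφ_lb ε ⟨hε0, by linarith⟩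
  have h1 : K * q y ≤ K * (t * q ε + (1 - t) * q x) :=
    mul_le_mul_of_nonneg_left hqc hK
  have h2 : 0 ≤ t * φ ε := mul_nonneg ht0.le hφε
  nlinarith [h1, hφc, h2]

lemma gcs_key (q φ : ℝ → ℝ) (K : ℝ) (hK : 0 ≤ K)
    (hq_conv : ConvexOn ℝ (Ioc 0 (1/2:ℝ)) q)
    (hq_lim : Tendsto q (nhdsWithin 0 (Ioi 0)) (nhds 0))
    (hφ_conc : ConcaveOn ℝ (Icc 0 1) φ)
    (hφ_lb : ∀ ε ∈ Ioo (0:ℝ) 1, 0 ≤ φ ε)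
    {x y : ℝ} (hy : 0 < y) (hyx : y < x) (hx : x ≤ 1/2) :
    K * q y - φ y ≤ (y / x) * (K * q x - φ x) := by
  have hx0 : (0:ℝ) < x := hy.trans hyx
  have hlim : Tendsto (fun ε => ((x - y)/(x - ε)) * (K * q ε)
      + (1 - (x - y)/(x - ε)) * (K * q x - φ x)) (nhdsWithin 0 (Ioi 0))
      (nhds ((y / x) * (K * q x - φ x))) := by
    have ht : Tendsto (fun ε : ℝ => (x - y)/(x - ε)) (nhdsWithin 0 (Ioi 0))
        (nhds ((x - y)/x)) := by
      apply Tendsto.mono_left _ nhdsWithin_le_nhds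
      have : Tendsto (fun ε : ℝ => (x - y)/(x - ε)) (nhds 0) (nhds ((x - y)/(x - 0))) := by
        apply Tendsto.div tendsto_const_nhds (tendsto_const_nhds.sub tendsto_id)
        simpa using hx0.ne'
      simpa using this
    have hq0 : Tendsto (fun ε => K * q ε) (nhdsWithin 0 (Ioi 0)) (nhds (K * 0)) :=
      tendsto_const_nhds.mul hq_lim
    have h1 : Tendsto (fun ε : ℝ => 1 - (x - y)/(x - ε)) (nhdsWithin 0 (Ioi 0))
        (nhds (1 - (x - y)/x)) :=
      (tendsto_const_nhds : Tendsto (fun _ : ℝ => (1:ℝ)) _ _).sub ht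
    have h2 := (ht.mul hq0).add (h1.mul
      (tendsto_const_nhds : Tendsto (fun _ : ℝ => K * q x - φ x) _ _))
    have heq : (x - y)/x * (K * 0) + (1 - (x - y)/x) * (K * q x - φ x)
        = (y / x) * (K * q x - φ x) := by
      rw [mul_zero, mul_zero, zero_add]
      congr 1
      field_simp
      ring
    rwa [heq] at h2
  apply ge_of_tendsto hlim
  filter_upwards [Ioo_mem_nhdsGT_of_mem (Set.mem_Ico.mpr ⟨le_refl (0:ℝ), hy⟩)] with ε hε
  exact gcs_key_aux q φ K hK hq_conv hφ_conc hφ_lb hε.1 hε.2 hyx hx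


/-- **Symmetric case of the generalized Clausing inequality.** Let `p, q` be nonnegative
integrable functions on `(0,1)`, both symmetric, with `p` non-decreasing on `(0, 1/2]`,
`q` convex on `(0, 1/2]`, `q(x) → 0` as `x → 0⁺`, `q(0) = 0`, and `∫₀¹ q = 1`. Let
`φ : [0,1] → ℝ` be concave, integrable, symmetric and with `φ(0) ≥ 0`. Then, with
`K = ∫₀¹ φ`, one has `0 ≤ ∫₀^{1/2} (K q - φ) p`, i.e. `∫₀¹ p φ ≤ K ∫₀¹ p q`. -/
theorem generalized_clausing_symmetric (p q φ : ℝ → ℝ)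
    (hp_nonneg : ∀ x ∈ Ioo (0:ℝ) 1, 0 ≤ p x)
    (hq_nonneg : ∀ x ∈ Ioo (0:ℝ) 1, 0 ≤ q x)
    (hp_int : IntegrableOn p (Ioo 0 1))
    (hq_int : IntegrableOn q (Ioo 0 1))
    (hp_symm : ∀ x ∈ Ioo (0:ℝ) 1, p x = p (1 - x))
    (hq_symm : ∀ x ∈ Ioo (0:ℝ) 1, q x = q (1 - x))
    (hp_mono : MonotoneOn p (Ioc 0 (1/2)))
    (hq_conv : ConvexOn ℝ (Ioc 0 (1/2)) q)
    (hq_lim : Tendsto q (nhdsWithin 0 (Ioi 0)) (nhds 0))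
    (hq_zero : q 0 = 0)
    (hq_one : ∫ x in Ioo (0:ℝ) 1, q x = 1)
    (hφ_conc : ConcaveOn ℝ (Icc 0 1) φ)
    (hφ_int : IntegrableOn φ (Ioo 0 1))
    (hφ_symm : ∀ x ∈ Icc (0:ℝ) 1, φ x = φ (1 - x))
    (hφ_zero : 0 ≤ φ 0)
    (hpφ_int : IntegrableOn (fun x => p x * φ x) (Ioo 0 1))
    (hpq_int : IntegrableOn (fun x => p x * q x) (Ioo 0 1)) :
    (0 ≤ ∫ x in Ioo (0:ℝ) (1/2),
        ((∫ t in Ioo (0:ℝ) 1, φ t) * q x - φ x) * p x) ∧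
    ∫ x in Ioo (0:ℝ) 1, p x * φ x ≤
      (∫ t in Ioo (0:ℝ) 1, φ t) * ∫ x in Ioo (0:ℝ) 1, p x * q x := by
  set K : ℝ := ∫ t in Ioo (0:ℝ) 1, φ t with hKdef
  have hsub1 : Ioo (0:ℝ) (1/2) ⊆ Ioo 0 1 := Ioo_subset_Ioo le_rfl (by norm_num)
  -- φ is nonneg on (0,1)
  have hφ1 : φ 1 = φ 0 := by
    have := hφ_symm 1 ⟨by norm_num, le_refl 1⟩
    simpa using this
  have hφ_lb : ∀ x ∈ Ioo (0:ℝ) 1, 0 ≤ φ x := by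
    intro x hx
    have h := hφ_conc.2 (show (0:ℝ) ∈ Icc (0:ℝ) 1 by constructor <;> norm_num)
      (show (1:ℝ) ∈ Icc (0:ℝ) 1 by constructor <;> norm_num)
      (show (0:ℝ) ≤ 1 - x by linarith [hx.2]) hx.1.le (by ring)
    simp only [smul_eq_mul, mul_zero, mul_one, zero_add] at h
    calc (0:ℝ) ≤ φ 0 := hφ_zero
    _ = (1 - x) * φ 0 + x * φ 1 := by rw [hφ1]; ring
    _ ≤ φ x := h
  have hK : 0 ≤ K := by
    rw [hKdef]
    exact setIntegral_nonneg measurableSet_Ioo hφ_lb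
  have hφ_symm' : ∀ x ∈ Ioo (0:ℝ) 1, φ x = φ (1 - x) := fun x hx =>
    hφ_symm x ⟨hx.1.le, hx.2.le⟩
  -- half integrals
  have hq_half : ∫ x in Ioo (0:ℝ) (1/2), q x = 1/2 := by
    have := gcs_sym_int q hq_int hq_symm
    rw [hq_one] at this; linarith
  have hφ_half : ∫ x in Ioo (0:ℝ) (1/2), φ x = K / 2 := by
    have h := gcs_sym_int φ hφ_int hφ_symm'
    rw [← hKdef] at h; linarith
  -- integrability on half interval
  have hq_h : IntegrableOn q (Ioo 0 (1/2)) := hq_int.mono_set hsub1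
  have hφ_h : IntegrableOn φ (Ioo 0 (1/2)) := hφ_int.mono_set hsub1
  have hpq_h : IntegrableOn (fun x => p x * q x) (Ioo 0 (1/2)) := hpq_int.mono_set hsub1
  have hpφ_h : IntegrableOn (fun x => p x * φ x) (Ioo 0 (1/2)) := hpφ_int.mono_set hsub1
  have hg_h : IntegrableOn (fun x => K * q x - φ x) (Ioo 0 (1/2)) :=
    (hq_h.const_mul K).sub hφ_h
  have hgp_h : IntegrableOn (fun x => (K * q x - φ x) * p x) (Ioo 0 (1/2)) := by
    apply Integrable.congr ((hpq_h.const_mul K).sub hpφ_h)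
    filter_upwards with x
    dsimp; ring
  have hg_zero : ∫ x in Ioo (0:ℝ) (1/2), (K * q x - φ x) = 0 := by
    rw [integral_sub (hq_h.const_mul K) hφ_h, integral_const_mul, hq_half, hφ_half]
    ring
  -- sign structure: choose M with (g x)(p x - M) ≥ 0 on (0,1/2)
  obtain ⟨M, hM⟩ : ∃ M : ℝ, ∀ x ∈ Ioo (0:ℝ) (1/2), 0 ≤ (K * q x - φ x) * (p x - M) := by
    by_cases hS : ∃ s ∈ Ioc (0:ℝ) (1/2), K * q s - φ s ≤ 0
    · set S : Set ℝ := {s | s ∈ Ioc (0:ℝ) (1/2) ∧ K * q s - φ s ≤ 0} with hSdef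
      have hSne : S.Nonempty := by obtain ⟨s, hs1, hs2⟩ := hS; exact ⟨s, hs1, hs2⟩
      have hbdd : BddAbove S := ⟨1/2, fun s hs => hs.1.2⟩
      set c : ℝ := sSup S with hcdef
      have hc_le : c ≤ 1/2 := csSup_le hSne (fun s hs => hs.1.2)
      have hc_pos : 0 < c := by
        obtain ⟨s, hs⟩ := hSne
        exact lt_of_lt_of_le hs.1.1 (le_csSup hbdd hs)
      have hcmem : c ∈ Ioc (0:ℝ) (1/2) := ⟨hc_pos, hc_le⟩
      refine ⟨p c, fun x hx => ?_⟩
      have hxIoc : x ∈ Ioc (0:ℝ) (1/2) := ⟨hx.1, hx.2.le⟩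
      rcases lt_trichotomy x c with hlt | heq | hgt
      · obtain ⟨s, hsS, hxs⟩ := exists_lt_of_lt_csSup hSne hlt
        have hgs : K * q x - φ x ≤ (x / s) * (K * q s - φ s) :=
          gcs_key q φ K hK hq_conv hq_lim hφ_conc hφ_lb hx.1 hxs hsS.1.2
        have hgx : K * q x - φ x ≤ 0 := by
          have h0 : (x / s) * (K * q s - φ s) ≤ 0 :=
            mul_nonpos_of_nonneg_of_nonpos
              (div_nonneg hx.1.le (hx.1.trans hxs).le) hsS.2
          linarith
        have hpx : p x ≤ p c := hp_mono hxIoc hcmem hlt.le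
        nlinarith [hgx, hpx]
      · rw [heq]; simp
      · have hgx : 0 < K * q x - φ x := by
          by_contra h
          push_neg at h
          have hmem : x ∈ S := ⟨hxIoc, h⟩
          have := le_csSup hbdd hmem
          linarith
        have hpx : p c ≤ p x := hp_mono hcmem hxIoc hgt.le
        nlinarith [hgx, hpx]
    · push_neg at hS
      refine ⟨0, fun x hx => ?_⟩
      have hgx := hS x ⟨hx.1, hx.2.le⟩
      have hpx := hp_nonneg x (hsub1 hx)
      nlinarith [hgx, hpx]
  -- part 1
  have hgpM : IntegrableOn (fun x => (K * q x - φ x) * (p x - M)) (Ioo 0 (1/2)) := by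
    apply Integrable.congr (hgp_h.sub (hg_h.const_mul M))
    filter_upwards with x
    dsimp; ring
  have part1 : 0 ≤ ∫ x in Ioo (0:ℝ) (1/2), (K * q x - φ x) * p x := by
    have hsplit : ∫ x in Ioo (0:ℝ) (1/2), (K * q x - φ x) * p x
        = (∫ x in Ioo (0:ℝ) (1/2), (K * q x - φ x) * (p x - M))
          + M * ∫ x in Ioo (0:ℝ) (1/2), (K * q x - φ x) := by
      rw [← integral_const_mul, ← integral_add hgpM (hg_h.const_mul M)]
      apply setIntegral_congr_fun measurableSet_Ioo
      intro x hx; dsimp; ring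
    rw [hsplit, hg_zero, mul_zero, add_zero]
    exact setIntegral_nonneg measurableSet_Ioo hM
  -- part 2
  have h2φ := gcs_sym_int (fun x => p x * φ x) hpφ_int
    (fun x hx => by rw [hp_symm x hx, hφ_symm' x hx])
  have h2q := gcs_sym_int (fun x => p x * q x) hpq_int
    (fun x hx => by rw [hp_symm x hx, hq_symm x hx])
  have hsplit2 : ∫ x in Ioo (0:ℝ) (1/2), (K * q x - φ x) * p x
      = K * (∫ x in Ioo (0:ℝ) (1/2), p x * q x) - ∫ x in Ioo (0:ℝ) (1/2), p x * φ x := by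
    rw [← integral_const_mul, ← integral_sub (hpq_h.const_mul K) hpφ_h]
    apply setIntegral_congr_fun measurableSet_Ioo
    intro x hx; dsimp; ring
  refine ⟨part1, ?_⟩
  rw [h2φ, h2q]
  rw [hsplit2] at part1
  nlinarith [part1]
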